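/- For any tuple n ∈ Z_k of positive integers with hgt(n) = s ≥ 1, the sequence of strict blowdowns at the leftmost possible 1 (repeatedly) terminates after exactly s steps at the tuple u_{k-s} = (1,2,...,2,1) of length k - s. -/

import Mathlib

/-- Hirzebruch–Jung continued fraction `[n₁,…,n_k] = n₁ - 1/(n₂ - 1/(⋯ - 1/n_k))`,
evaluated from the right (with the convention `(0 : ℚ)⁻¹ = 0`, so `hjcf [n] = n`). -/
def hjcf : List ℤ → ℚ
  | [] => 0
  | a :: l => (a : ℚ) - (hjcf l)⁻¹

/-- A tuple is admissible if all intermediate denominators `[n_j,…,n_k]` (for `j ≥ 2`)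
are positive. -/
def Admissible (l : List ℤ) : Prop :=
  ∀ j : ℕ, 1 ≤ j → j < l.length → 0 < hjcf (l.drop j)

/-- Strict blowup at the `j`-th term (1-indexed): for `j ≤ r-1` it maps
`(n₁,…,n_r)` to `(n₁,…,n_{j-1}, n_j+1, 1, n_{j+1}+1, …, n_r)`;
for `j = r` it maps `(n₁,…,n_r)` to `(n₁,…,n_{r-1}, n_r+1, 1)`. -/
def psi : ℕ → List ℤ → List ℤ
  | 0, l => l
  | 1, [] => []
  | 1, [a] => [a + 1, 1]
  | 1, a :: b :: t => (a + 1) :: 1 :: (b + 1) :: t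
  | _ + 2, [] => []
  | j + 2, a :: t => a :: psi (j + 1) t

/-- `ReachesIn s a b` : `b` is obtained from `a` by a sequence of `s` strict blowups. -/
inductive ReachesIn : ℕ → List ℤ → List ℤ → Prop
  | refl (l : List ℤ) : ReachesIn 0 l l
  | step {s : ℕ} {a b : List ℤ} (j : ℕ) (hj : 1 ≤ j) (hj' : j ≤ b.length) :
      ReachesIn s a b → ReachesIn (s + 1) a (psi j b)

/-- `uTuple l = (1,2,…,2,1)` of length `l ≥ 2`; `uTuple 1 = (0)`. -/
def uTuple (l : ℕ) : List ℤ :=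
  if l ≤ 1 then [0] else 1 :: (List.replicate (l - 2) 2 ++ [1])

/-- Height: the minimal number of strict blowups needed to reach `n` from some `uTuple l`. -/
noncomputable def hgt (n : List ℤ) : ℕ :=
  sInf {s | ∃ l : ℕ, 1 ≤ l ∧ ReachesIn s (uTuple l) n}

/-- Derived tuple ("new framings after handle slides"): `n'_k = n_k` and
`n'_i = n_i + n'_{i+1} - 2`. -/
def derived : List ℤ → List ℤ
  | [] => []
  | [a] => [a]
  | a :: b :: t => (a + (derived (b :: t)).headI - 2) :: derived (b :: t)

/-- Strict blowdown at the `(j+1)`-st term (the left inverse of `psi j`): it deletes the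
entry at the `(j+1)`-st position and subtracts 1 from each adjacent incremented entry. -/
def bd : ℕ → List ℤ → List ℤ
  | 0, l => l
  | 1, [] => []
  | 1, [a] => [a]
  | 1, [a, _] => [a - 1]
  | 1, a :: _ :: c :: t => (a - 1) :: (c - 1) :: t
  | _ + 2, [] => []
  | j + 2, a :: t => a :: bd (j + 1) t

/-- One strict blowdown at the leftmost possible `1` (an entry `1` not in the first
position); if there is none, do nothing. -/
def leftmostOneStep (l : List ℤ) : List ℤ :=
  match (l.drop 1).findIdx? (fun x => x == 1) with
  | some i => bd (i + 1) l
  | none => l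

-- basic simp lemmas
@[simp] lemma hjcf_nil : hjcf [] = 0 := rfl
@[simp] lemma hjcf_cons (a : ℤ) (l : List ℤ) : hjcf (a :: l) = (a : ℚ) - (hjcf l)⁻¹ := rfl

/-- Height as an integer. -/
def H (n : List ℤ) : ℤ := n.sum - 2 * ((n.length : ℤ) - 1)

lemma H_nil : H [] = 2 := by simp [H]

lemma H_cons (a : ℤ) (l : List ℤ) : H (a :: l) = a - 2 + H l := by
  simp [H]; push_cast; ring

lemma H_uTuple (l : ℕ) : H (uTuple l) = 0 := by
  by_cases h : l ≤ 1
  · simp [uTuple, h, H]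
  · have h2 : 2 ≤ l := by omega
    simp [uTuple, h, H, List.sum_append, List.sum_replicate]
    push_cast [Nat.cast_sub h2]
    ring

/-- Key estimate: a tuple whose entries are ≥ 2 except the last entry ≥ 1 has `hjcf ≥ 1`,
with equality exactly for `(2,…,2,1)`. -/
lemma one_le_hjcf : ∀ (m : List ℤ), m ≠ [] → (∀ x ∈ m.dropLast, 2 ≤ x) →
    (∀ x ∈ m, 1 ≤ x) →
    1 ≤ hjcf m ∧ (hjcf m = 1 → m = List.replicate (m.length - 1) 2 ++ [1]) := by
  intro m
  induction m with
  | nil => intro h; exact absurd rfl h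
  | cons a m ih =>
    intro _ hd hp
    cases m with
    | nil =>
      have ha : (1:ℤ) ≤ a := hp a (by simp)
      constructor
      · simp; exact_mod_cast ha
      · intro h
        simp at h
        have : a = 1 := by exact_mod_cast h
        simp [this]
    | cons b m' =>
      have hne : (b :: m') ≠ [] := by simp
      have ha : (2:ℤ) ≤ a := hd a (by simp [List.dropLast_cons_of_ne_nil hne])
      have hd' : ∀ x ∈ (b :: m').dropLast, 2 ≤ x := by
        intro x hx
        exact hd x (by simp [List.dropLast_cons_of_ne_nil hne, hx])
      have hp' : ∀ x ∈ (b :: m'), 1 ≤ x := fun x hx => hp x (by simp [hx])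
      obtain ⟨h1, h2⟩ := ih hne hd' hp'
      have hpos : (0:ℚ) < hjcf (b :: m') := by linarith
      have hinv1 : (hjcf (b :: m'))⁻¹ ≤ 1 := by
        rw [inv_le_one_iff₀]; right; exact h1
      have hinv0 : 0 < (hjcf (b :: m'))⁻¹ := by positivity
      have haq : (2:ℚ) ≤ (a:ℚ) := by exact_mod_cast ha
      have hrw : hjcf (a :: b :: m') = (a:ℚ) - (hjcf (b :: m'))⁻¹ := rfl
      constructor
      · rw [hrw]; linarith
      · intro h
        rw [hrw] at h
        -- a - inv = 1, a ≥ 2, inv ≤ 1 ⇒ a = 2, inv = 1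
        have ha2 : (a:ℚ) = 2 := by
          have : (a:ℚ) ≤ 2 := by linarith
          linarith [haq]
        have hinv : (hjcf (b :: m'))⁻¹ = 1 := by linarith
        have hcf1 : hjcf (b :: m') = 1 := by
          rwa [inv_eq_one] at hinv
        have hmrep := h2 hcf1
        have hlen : (b :: m').length - 1 = m'.length := by simp
        rw [hlen] at hmrep
        have ha2' : a = 2 := by exact_mod_cast ha2
        have hg : (a :: b :: m').length - 1 = m'.length + 1 := by simp
        rw [hg, ha2', hmrep, List.replicate_succ, List.cons_append]

/-- If a positive zero-fraction has no `1` strictly inside, it is `uTuple`. -/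
lemma eq_uTuple_of_no_interior_one (n : List ℤ) (hpos : ∀ x ∈ n, 0 < x)
    (hcf : hjcf n = 0) (hlen : 2 ≤ n.length)
    (hno : ∀ x ∈ n.tail.dropLast, x ≠ 1) : n = uTuple n.length := by
  obtain ⟨a, m, rfl⟩ : ∃ a m, n = a :: m := by
    cases n with
    | nil => simp at hlen
    | cons a m => exact ⟨a, m, rfl⟩
  have hmne : m ≠ [] := by
    intro h; subst h; simp at hlen
  have hd : ∀ x ∈ m.dropLast, 2 ≤ x := by
    intro x hx
    have h1 : x ≠ 1 := hno x (by simpa using hx)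
    have h2 : 0 < x := hpos x (by simp [List.mem_of_mem_dropLast hx])
    omega
  have hp : ∀ x ∈ m, 1 ≤ x := fun x hx => hpos x (by simp [hx])
  obtain ⟨h1, h2⟩ := one_le_hjcf m hmne hd hp
  have hrw : hjcf (a :: m) = (a:ℚ) - (hjcf m)⁻¹ := rfl
  rw [hrw] at hcf
  have hpos' : (0:ℚ) < hjcf m := by linarith
  have hinv1 : (hjcf m)⁻¹ ≤ 1 := by rw [inv_le_one_iff₀]; right; exact h1
  have haq : (a:ℚ) = (hjcf m)⁻¹ := by linarith
  have ha1 : (1:ℤ) ≤ a := hpos a (by simp)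
  have ha1q : (1:ℚ) ≤ (a:ℚ) := by exact_mod_cast ha1
  have haeq : (a:ℚ) = 1 := le_antisymm (by linarith) ha1q
  have hcf1 : hjcf m = 1 := by
    have : (hjcf m)⁻¹ = 1 := by linarith
    rwa [inv_eq_one] at this
  have hmrep := h2 hcf1
  have ha : a = 1 := by exact_mod_cast haeq
  set k := m.length with hk
  have hlm : 1 ≤ k := by
    rw [hk]; exact List.length_pos_iff.mpr hmne
  rw [ha, hmrep]
  have hL : (1 :: (List.replicate (k - 1) 2 ++ [1]) : List ℤ).length = k + 1 := by
    simp; omega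
  rw [hL, uTuple, if_neg (by omega)]
  have : k + 1 - 2 = k - 1 := by omega
  rw [this]

/-- `hjcf (p ++ A)` only depends on `hjcf A`. -/
lemma hjcf_append_congr (p : List ℤ) {A B : List ℤ} (h : hjcf A = hjcf B) :
    hjcf (p ++ A) = hjcf (p ++ B) := by
  induction p with
  | nil => simpa using h
  | cons x p ih => simp only [List.cons_append, hjcf_cons, ih]

/-- The core blowdown identity for continued fractions. -/
lemma hjcf_bd_core (a c : ℤ) (t : List ℤ) (hx : 1 < hjcf (c :: t)) :
    hjcf ((a - 1) :: (c - 1) :: t) = hjcf (a :: 1 :: c :: t) := by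
  have hx0 : hjcf (c :: t) ≠ 0 := by intro h; rw [h] at hx; norm_num at hx
  have hx1 : hjcf (c :: t) - 1 ≠ 0 := by
    intro h; rw [sub_eq_zero] at h; rw [← h] at hx; norm_num at hx
  have h1 : hjcf ((c - 1) :: t) = hjcf (c :: t) - 1 := by
    rw [hjcf_cons, hjcf_cons]; push_cast; ring
  have h2 : hjcf (1 :: c :: t) = 1 - (hjcf (c :: t))⁻¹ := by
    rw [hjcf_cons 1 (c :: t)]; norm_num
  have hy : 1 - (hjcf (c :: t))⁻¹ ≠ 0 := by
    have h3 : (hjcf (c :: t))⁻¹ < 1 := by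
      rw [inv_lt_one_iff₀]; right; exact hx
    intro h; rw [sub_eq_zero] at h; rw [← h] at h3; norm_num at h3
  rw [hjcf_cons (a-1) ((c-1)::t), h1, hjcf_cons a (1 :: c :: t), h2]
  push_cast
  generalize hjcf (c :: t) = x at hx0 hx1 hy
  field_simp
  ring

lemma bd_eq (p : List ℤ) (a c : ℤ) (t : List ℤ) :
    bd (p.length + 1) (p ++ a :: 1 :: c :: t) = p ++ (a - 1) :: (c - 1) :: t := by
  induction p with
  | nil => rfl
  | cons x p ih =>
    show x :: bd (p.length + 1) (p ++ a :: 1 :: c :: t) = x :: (p ++ (a - 1) :: (c - 1) :: t)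
    rw [ih]

lemma psi_eq (p : List ℤ) (a c : ℤ) (t : List ℤ) :
    psi (p.length + 1) (p ++ a :: c :: t) = p ++ (a + 1) :: 1 :: (c + 1) :: t := by
  induction p with
  | nil => rfl
  | cons x p ih =>
    show x :: psi (p.length + 1) (p ++ a :: c :: t) = x :: (p ++ (a + 1) :: 1 :: (c + 1) :: t)
    rw [ih]

lemma split_of_findIdx? : ∀ (l : List ℤ) (i : ℕ),
    l.findIdx? (fun x => x == 1) = some i →
    ∃ p t, l = p ++ 1 :: t ∧ p.length = i ∧ ∀ x ∈ p, x ≠ 1 := by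
  intro l
  induction l with
  | nil => intro i h; simp at h
  | cons x xs ih =>
    intro i h
    rw [List.findIdx?_cons] at h
    by_cases hx : x = 1
    · rw [if_pos (by simp [hx])] at h
      obtain rfl : (0 : ℕ) = i := by simpa using h
      exact ⟨[], xs, by simp [hx], rfl, by simp⟩
    · rw [if_neg (by simp [hx])] at h
      obtain ⟨j, hj, hji⟩ := Option.map_eq_some_iff.mp h
      obtain ⟨p, t, rfl, hl, hp⟩ := ih j hj
      refine ⟨x :: p, t, by simp, by simp [hl, hji], ?_⟩
      intro y hy
      rcases List.mem_cons.mp hy with rfl | hy'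
      · exact hx
      · exact hp y hy'

lemma length_decomp (p : List ℤ) (a c : ℤ) (t : List ℤ) :
    (p ++ a :: 1 :: c :: t).length = p.length + 3 + t.length := by simp; omega

lemma x_gt_one (p : List ℤ) (a c : ℤ) (t : List ℤ)
    (hadm : Admissible (p ++ a :: 1 :: c :: t)) : 1 < hjcf (c :: t) := by
  have l1 : (p ++ a :: 1 :: c :: t).drop (p.length + 1) = 1 :: c :: t :=
    List.drop_length_add_append 1
  have l2 : (p ++ a :: 1 :: c :: t).drop (p.length + 2) = c :: t :=
    List.drop_length_add_append 2
  have hL := length_decomp p a c t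
  have h1 : 0 < hjcf (1 :: c :: t) := by
    have := hadm (p.length + 1) (by omega) (by omega)
    rwa [l1] at this
  have h2 : 0 < hjcf (c :: t) := by
    have := hadm (p.length + 2) (by omega) (by omega)
    rwa [l2] at this
  have hr : hjcf (1 :: c :: t) = 1 - (hjcf (c :: t))⁻¹ := by
    rw [hjcf_cons 1 (c :: t)]; norm_num
  rw [hr] at h1
  have hinv : (hjcf (c :: t))⁻¹ < 1 := by linarith
  rcases inv_lt_one_iff₀.mp hinv with h | h
  · linarith
  · exact h

lemma c_ge_two (p : List ℤ) (a c : ℤ) (t : List ℤ)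
    (hpos : ∀ x ∈ p ++ a :: 1 :: c :: t, 0 < x)
    (hadm : Admissible (p ++ a :: 1 :: c :: t)) : 2 ≤ c := by
  have hx := x_gt_one p a c t hadm
  have hc1 : 1 ≤ c := hpos c (by simp)
  by_contra hc
  have hc1' : c = 1 := by omega
  subst hc1'
  have hr : hjcf ((1 : ℤ) :: t) = 1 - (hjcf t)⁻¹ := by
    rw [hjcf_cons 1 t]; norm_num
  rw [hr] at hx
  cases t with
  | nil => simp at hx
  | cons d t' =>
    have hL := length_decomp p a 1 (d :: t')
    have l3 : (p ++ a :: 1 :: 1 :: d :: t').drop (p.length + 3) = d :: t' :=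
      List.drop_length_add_append 3
    have hdl : (d :: t').length = t'.length + 1 := by simp
    have h3 : 0 < hjcf (d :: t') := by
      have := hadm (p.length + 3) (by omega) (by omega)
      rwa [l3] at this
    have : (0:ℚ) < (hjcf (d :: t'))⁻¹ := by positivity
    linarith

lemma a_ge_two (p : List ℤ) (a c : ℤ) (t : List ℤ)
    (hpos : ∀ x ∈ p ++ a :: 1 :: c :: t, 0 < x)
    (hadm : Admissible (p ++ a :: 1 :: c :: t))
    (hcf : hjcf (p ++ a :: 1 :: c :: t) = 0)
    (hp2 : p ≠ [] → a ≠ 1) : 2 ≤ a := by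
  have ha1 : 1 ≤ a := hpos a (by simp)
  rcases List.eq_nil_or_concat p with rfl | ⟨q, b, rfl⟩
  · -- n = a :: 1 :: c :: t, use hjcf = 0
    have hx := x_gt_one [] a c t hadm
    have hy : 0 < hjcf (1 :: c :: t) := by
      have := hadm 1 (by omega) (by simp)
      simpa using this
    have hr : hjcf (1 :: c :: t) = 1 - (hjcf (c :: t))⁻¹ := by
      rw [hjcf_cons 1 (c :: t)]; norm_num
    have hxinv : (0:ℚ) < (hjcf (c :: t))⁻¹ := by positivity
    have hy1 : hjcf (1 :: c :: t) < 1 := by rw [hr]; linarith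
    have hcf' : (a : ℚ) = (hjcf (1 :: c :: t))⁻¹ := by
      have : hjcf (([] : List ℤ) ++ a :: 1 :: c :: t)
          = (a:ℚ) - (hjcf (1 :: c :: t))⁻¹ := by simp
      rw [this] at hcf; linarith
    have : 1 < (hjcf (1 :: c :: t))⁻¹ := one_lt_inv_iff₀.mpr ⟨hy, hy1⟩
    have : (1:ℚ) < (a:ℚ) := by rw [hcf']; exact this
    have : (1:ℤ) < a := by exact_mod_cast this
    omega
  · have := hp2 (by simp)
    omega

lemma H_append (p l : List ℤ) : H (p ++ l) = p.sum - 2 * p.length + H l := by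
  simp [H]; push_cast; ring

/-- Properties of a strict blowdown at an interior 1. -/
lemma bd_props (p : List ℤ) (a c : ℤ) (t : List ℤ)
    (hpos : ∀ x ∈ p ++ a :: 1 :: c :: t, 0 < x)
    (hadm : Admissible (p ++ a :: 1 :: c :: t))
    (hcf : hjcf (p ++ a :: 1 :: c :: t) = 0)
    (ha : 2 ≤ a) (hc : 2 ≤ c) :
    (∀ x ∈ p ++ (a - 1) :: (c - 1) :: t, 0 < x) ∧
    Admissible (p ++ (a - 1) :: (c - 1) :: t) ∧
    hjcf (p ++ (a - 1) :: (c - 1) :: t) = 0 ∧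
    H (p ++ (a - 1) :: (c - 1) :: t) = H (p ++ a :: 1 :: c :: t) - 1 ∧
    (p ++ (a - 1) :: (c - 1) :: t).length + 1 = (p ++ a :: 1 :: c :: t).length ∧
    psi (p.length + 1) (p ++ (a - 1) :: (c - 1) :: t) = p ++ a :: 1 :: c :: t := by
  have hx := x_gt_one p a c t hadm
  have hcore := hjcf_bd_core a c t hx
  have hL := length_decomp p a c t
  have hL' : (p ++ (a - 1) :: (c - 1) :: t).length = p.length + 2 + t.length := by
    simp; omega
  have hc1 : hjcf ((c - 1) :: t) = hjcf (c :: t) - 1 := by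
    rw [hjcf_cons, hjcf_cons]; push_cast; ring
  refine ⟨?_, ?_, ?_, ?_, by omega, ?_⟩
  · -- positivity
    intro x hx'
    rcases List.mem_append.mp hx' with h | h
    · exact hpos x (List.mem_append.mpr (Or.inl h))
    · rcases List.mem_cons.mp h with rfl | h
      · omega
      rcases List.mem_cons.mp h with rfl | h
      · omega
      · exact hpos x (by simp [h])
  · -- admissibility
    intro j hj1 hj2
    rw [hL'] at hj2
    rcases Nat.lt_or_ge j (p.length + 1) with hlt | hge
    · have hjp : j ≤ p.length := by omega
      rw [List.drop_append_of_le_length hjp]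
      rw [hjcf_append_congr (p.drop j) hcore]
      rw [← List.drop_append_of_le_length hjp]
      exact hadm j hj1 (by omega)
    · rcases Nat.lt_or_ge j (p.length + 2) with hlt2 | hge2
      · have hj : j = p.length + 1 := by omega
        subst hj
        have : (p ++ (a - 1) :: (c - 1) :: t).drop (p.length + 1) = (c - 1) :: t :=
          List.drop_length_add_append 1
        rw [this, hc1]
        linarith
      · obtain ⟨r, rfl⟩ : ∃ r, j = p.length + (2 + r) := ⟨j - (p.length + 2), by omega⟩
        have e1 : (p ++ (a - 1) :: (c - 1) :: t).drop (p.length + (2 + r)) = t.drop r := by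
          rw [List.drop_length_add_append (2 + r), show 2 + r = r + 1 + 1 from by omega,
            List.drop_succ_cons, List.drop_succ_cons]
        have e2 : (p ++ a :: 1 :: c :: t).drop (p.length + (3 + r)) = t.drop r := by
          rw [List.drop_length_add_append (3 + r), show 3 + r = r + 1 + 1 + 1 from by omega,
            List.drop_succ_cons, List.drop_succ_cons, List.drop_succ_cons]
        rw [e1, ← e2]
        exact hadm _ (by omega) (by omega)
  · rw [hjcf_append_congr p hcore]; exact hcf
  · rw [H_append, H_append]
    have e1 : H ((a - 1) :: (c - 1) :: t) = H (a :: 1 :: c :: t) - 1 := by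
      rw [H_cons, H_cons, H_cons, H_cons, H_cons]; ring
    rw [e1]; ring
  · rw [psi_eq]
    congr 2 <;> ring

/-- Decomposition at the leftmost interior 1. -/
lemma decomp (n : List ℤ) (hpos : ∀ x ∈ n, 0 < x) (hadm : Admissible n)
    (hcf : hjcf n = 0) (hlen : 2 ≤ n.length) (hne : n ≠ uTuple n.length) :
    ∃ p a c t, n = p ++ a :: 1 :: c :: t ∧ 2 ≤ a ∧ 2 ≤ c ∧
      leftmostOneStep n = p ++ (a - 1) :: (c - 1) :: t := by
  have hex : ¬ ∀ x ∈ n.tail.dropLast, x ≠ 1 := by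
    intro h
    exact hne (eq_uTuple_of_no_interior_one n hpos hcf hlen h)
  push_neg at hex
  obtain ⟨y, hy, hy1⟩ := hex
  obtain ⟨a0, m, rfl⟩ : ∃ a m, n = a :: m := by
    cases n with
    | nil => simp at hlen
    | cons a m => exact ⟨a, m, rfl⟩
  have htail : (a0 :: m).tail = m := rfl
  rw [htail] at hy
  have hym : y ∈ m := List.dropLast_subset m hy
  cases hfi : (m.findIdx? (fun x => x == 1)) with
  | none =>
    rw [List.findIdx?_eq_none_iff] at hfi
    have := hfi y hym
    simp [hy1] at this
  | some i =>
    obtain ⟨q, r, hm, hq, hqno⟩ := split_of_findIdx? m i hfi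
    -- r is nonempty
    cases r with
    | nil =>
      exfalso
      rw [hm] at hy
      rw [List.dropLast_concat] at hy
      exact hqno y hy hy1
    | cons c t =>
      have hdrop1 : (a0 :: m).drop 1 = m := rfl
      have hlos : leftmostOneStep (a0 :: m) = bd (i + 1) (a0 :: m) := by
        unfold leftmostOneStep
        rw [hdrop1, hfi]
      rcases List.eq_nil_or_concat q with rfl | ⟨q0, b, rfl⟩
      · -- the 1 is at position 2 of n
        simp only [List.nil_append] at hm
        subst hm
        have hi : i = 0 := by simpa using hq.symm
        refine ⟨[], a0, c, t, by simp, ?_, ?_, ?_⟩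
        · exact a_ge_two [] a0 c t (by simpa using hpos) (by simpa using hadm)
            (by simpa using hcf) (by intro h; simp at h)
        · exact c_ge_two [] a0 c t (by simpa using hpos) (by simpa using hadm)
        · rw [hlos, hi]
          have := bd_eq [] a0 c t
          simpa using this
      · -- the 1 is at position ≥ 3 of n
        rw [hm]
        have hsplit : a0 :: (q0.concat b ++ 1 :: c :: t) = (a0 :: q0) ++ b :: 1 :: c :: t := by
          simp
        refine ⟨a0 :: q0, b, c, t, ?_, ?_, ?_, ?_⟩
        · exact hsplit
        · refine a_ge_two (a0 :: q0) b c t ?_ ?_ ?_ ?_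
          · rw [← hsplit, ← hm]; exact fun x hx => hpos x (by simp [hx])
          · rw [← hsplit, ← hm]; exact hadm
          · rw [← hsplit, ← hm]; exact hcf
          · intro _
            exact hqno b (by simp)
        · refine c_ge_two (a0 :: q0) b c t ?_ ?_
          · rw [← hsplit, ← hm]; exact fun x hx => hpos x (by simp [hx])
          · rw [← hsplit, ← hm]; exact hadm
        · rw [← hm, hlos]
          have hi' : (a0 :: q0).length = i := by
            simp only [List.length_concat] at hq
            simpa using hq
          rw [hm, hsplit, ← hi', bd_eq]

lemma H_psi_le (j : ℕ) (b : List ℤ) (h1 : 1 ≤ j) (h2 : j ≤ b.length) :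
    H (psi j b) ≤ H b + 1 := by
  induction j generalizing b with
  | zero => omega
  | succ k ih =>
    cases k with
    | zero =>
      cases b with
      | nil => simp at h2
      | cons a t =>
        cases t with
        | nil =>
          show H [a + 1, 1] ≤ H [a] + 1
          rw [H_cons, H_cons, H_cons, H_nil]; linarith
        | cons b' t' =>
          show H ((a + 1) :: 1 :: (b' + 1) :: t') ≤ H (a :: b' :: t') + 1
          rw [H_cons, H_cons, H_cons, H_cons, H_cons]; linarith
    | succ k' =>
      cases b with
      | nil => simp at h2
      | cons a t =>
        show H (a :: psi (k' + 1) t) ≤ H (a :: t) + 1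
        rw [H_cons, H_cons]
        have := ih t (by omega) (by simp at h2; omega)
        linarith

lemma H_le_of_reaches {s : ℕ} {a b : List ℤ} (h : ReachesIn s a b) : H b ≤ H a + s := by
  induction h with
  | refl l => simp
  | step j hj hj' _ ih =>
    have := H_psi_le j _ hj hj'
    push_cast
    push_cast at ih
    linarith

lemma psi_ne_nil (j : ℕ) (b : List ℤ) (hb : b ≠ []) : psi j b ≠ [] := by
  match j, b with
  | 0, l => exact hb
  | 1, [] => exact hb
  | 1, [a] => simp [psi]
  | 1, a :: b :: t => simp [psi]
  | j + 2, [] => exact hb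
  | j + 2, a :: t => simp [psi]

lemma reaches_ne_nil {s : ℕ} {a b : List ℤ} (h : ReachesIn s a b) (ha : a ≠ []) : b ≠ [] := by
  induction h with
  | refl l => exact ha
  | step j hj hj' _ ih => exact psi_ne_nil j _ (ih ha)

lemma uTuple_ne_nil (l : ℕ) : uTuple l ≠ [] := by
  unfold uTuple; split <;> simp

/-- Reachability of positive admissible zero tuples from `uTuple`. -/
lemma reach : ∀ (k : ℕ) (n : List ℤ), n.length ≤ k →
    (∀ x ∈ n, 0 < x) → Admissible n → hjcf n = 0 → 2 ≤ n.length →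
    0 ≤ H n ∧ (H n).toNat + 2 ≤ n.length ∧
      ReachesIn (H n).toNat (uTuple (n.length - (H n).toNat)) n := by
  intro k
  induction k with
  | zero => intro n h _ _ _ h2; omega
  | succ k ih =>
    intro n hk hpos hadm hcf hlen
    by_cases hu : n = uTuple n.length
    · have hH : H n = 0 := by rw [hu]; exact H_uTuple n.length
      rw [hH]
      refine ⟨by simp, by simpa using hlen, ?_⟩
      have h' : ReachesIn 0 (uTuple n.length) n := by
        nth_rewrite 2 [hu]; exact ReachesIn.refl _
      simpa using h'
    · obtain ⟨p, a, c, t, hdec, ha, hc, _⟩ := decomp n hpos hadm hcf hlen hu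
      subst hdec
      obtain ⟨hpos', hadm', hcf', hH', hlen', hpsi'⟩ :=
        bd_props p a c t hpos hadm hcf ha hc
      set n' := p ++ (a - 1) :: (c - 1) :: t with hn'
      have hL := length_decomp p a c t
      have hlen2 : 2 ≤ n'.length := by
        have := hlen'; omega
      obtain ⟨h0, hb, hr⟩ := ih n' (by omega) hpos' hadm' hcf' hlen2
      have hHn : H (p ++ a :: 1 :: c :: t) = H n' + 1 := by omega
      have htn : (H (p ++ a :: 1 :: c :: t)).toNat = (H n').toNat + 1 := by omega
      refine ⟨by omega, by omega, ?_⟩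
      have hstep := ReachesIn.step (p.length + 1) (by omega)
        (by omega) hr
      rw [hpsi'] at hstep
      have harg : n'.length - (H n').toNat
          = (p ++ a :: 1 :: c :: t).length - ((H n').toNat + 1) := by
        omega
      rw [htn, ← harg]
      exact hstep

lemma hgt_eq (n : List ℤ) (hpos : ∀ x ∈ n, 0 < x) (hadm : Admissible n)
    (hcf : hjcf n = 0) (hlen : 2 ≤ n.length) : hgt n = (H n).toNat := by
  obtain ⟨h0, hb, hr⟩ := reach n.length n le_rfl hpos hadm hcf hlen
  have hmem : (H n).toNat ∈ {s | ∃ l : ℕ, 1 ≤ l ∧ ReachesIn s (uTuple l) n} :=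
    ⟨n.length - (H n).toNat, by omega, hr⟩
  unfold hgt
  apply le_antisymm
  · exact Nat.sInf_le hmem
  · apply le_csInf ⟨_, hmem⟩
    rintro s ⟨l, hl, hrs⟩
    have := H_le_of_reaches hrs
    rw [H_uTuple] at this
    omega

lemma main_aux : ∀ (s : ℕ) (n : List ℤ), (∀ x ∈ n, 0 < x) → Admissible n → hjcf n = 0 →
    2 ≤ n.length → (H n).toNat = s → leftmostOneStep^[s] n = uTuple (n.length - s) := by
  intro s
  induction s with
  | zero =>
    intro n hpos hadm hcf hlen hH
    obtain ⟨h0, -, -⟩ := reach n.length n le_rfl hpos hadm hcf hlen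
    have hH0 : H n = 0 := by omega
    have hu : n = uTuple n.length := by
      by_contra hu
      obtain ⟨p, a, c, t, hdec, ha, hc, -⟩ := decomp n hpos hadm hcf hlen hu
      subst hdec
      obtain ⟨hpos', hadm', hcf', hH', hlen', -⟩ := bd_props p a c t hpos hadm hcf ha hc
      have hL := length_decomp p a c t
      obtain ⟨h0', -, -⟩ := reach _ _ le_rfl hpos' hadm' hcf' (by omega)
      omega
    simpa using hu
  | succ s ih =>
    intro n hpos hadm hcf hlen hH
    have hu : n ≠ uTuple n.length := by
      intro h
      rw [h, H_uTuple] at hH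
      simp at hH
    obtain ⟨p, a, c, t, hdec, ha, hc, hlos⟩ := decomp n hpos hadm hcf hlen hu
    subst hdec
    obtain ⟨hpos', hadm', hcf', hH', hlen', -⟩ := bd_props p a c t hpos hadm hcf ha hc
    have hL := length_decomp p a c t
    obtain ⟨h0', -, -⟩ := reach _ _ le_rfl hpos' hadm' hcf' (by omega)
    have hH2 : (H (p ++ (a - 1) :: (c - 1) :: t)).toNat = s := by omega
    have hih := ih _ hpos' hadm' hcf' (by omega) hH2
    rw [Function.iterate_succ_apply, hlos, hih]
    congr 1
    omega

/-- For a positive tuple `n ∈ Z_k` with `hgt n = s ≥ 1`, the sequence of strict blowdowns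
at the leftmost possible `1` terminates after exactly `s` steps at `u_{k-s}`. -/
theorem leftmost_blowdown_seq (n : List ℤ) (s : ℕ)
    (hpos : ∀ x ∈ n, 0 < x) (hadm : Admissible n) (hcf : hjcf n = 0)
    (hhgt : hgt n = s) (hs : 1 ≤ s) :
    leftmostOneStep^[s] n = uTuple (n.length - s) := by
  by_cases hlen : 2 ≤ n.length
  · have h := hgt_eq n hpos hadm hcf hlen
    exact main_aux s n hpos hadm hcf hlen (by omega)
  · exfalso
    cases n with
    | nil =>
      have hS : {s | ∃ l : ℕ, 1 ≤ l ∧ ReachesIn s (uTuple l) ([] : List ℤ)} = ∅ := by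
        ext s'
        simp only [Set.mem_setOf_eq, Set.mem_empty_iff_false, iff_false]
        rintro ⟨l, hl, hr⟩
        exact reaches_ne_nil hr (uTuple_ne_nil l) rfl
      have h0 : hgt ([] : List ℤ) = 0 := by
        unfold hgt; rw [hS]; exact Nat.sInf_empty
      omega
    | cons x m =>
      cases m with
      | nil =>
        have hx : (x : ℚ) = 0 := by simpa using hcf
        have hx0 : x = 0 := by exact_mod_cast hx
        have := hpos x (by simp)
        omega
      | cons y m' => simp at hlen
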